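/- arXiv:2007.02782 — 2 statements merged into one kernel-verified Lean document; each statement's English description precedes it below -/
import Mathlib

section
/- Let p be a prime, ω ∈ ℂ a primitive p-th root of unity, A an m×n matrix over ℤ/p and b ∈ (ℤ/p)^m. For each row i with V_i nonempty, in the quotient *-algebra ℂΓ(A,b)/⟨J − ω·1⟩ one has ∑_{x∈S_i(A,b)} ∏_{j∈V_i} f_j(x_j) = 1, where f_j(s) := (1/p)·∑_{t=0}^{p-1} (ω^{-s} g_j)^t. -/
set_option maxHeartbeats 1000000
noncomputable section

/-! ### The conjugate-linear star structure on a monoid algebra `ℂ[M]`,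
where `M` is a monoid with an (anti-multiplicative) star operation.
For a group `G` (with `star = ⁻¹`, see below) this is the usual star structure
`(λ·g)* = conj(λ)·g⁻¹` on the group `*`-algebra `ℂG`. -/

section MonoidAlgebraStar

variable {M : Type*} [Monoid M] [StarMul M]

/-- the star operation on `ℂ[M]`: `(λ·m)* = conj(λ)·(star m)` -/
noncomputable def mstar (f : MonoidAlgebra ℂ M) : MonoidAlgebra ℂ M :=
  MonoidAlgebra.ofCoeff <| Finsupp.equivMapDomain ⟨star, star, star_involutive, star_involutive⟩
    (Finsupp.mapRange (starRingEnd ℂ) (map_zero _) f.coeff)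

lemma mstar_apply (f : MonoidAlgebra ℂ M) (x : M) :
    (mstar f).coeff x = starRingEnd ℂ (f.coeff (star x)) := rfl

lemma mstar_single (a : M) (c : ℂ) :
    mstar (MonoidAlgebra.single a c) = MonoidAlgebra.single (star a) (starRingEnd ℂ c) := by
  classical
  ext x
  show starRingEnd ℂ ((Finsupp.single a c) (star x)) =
    (Finsupp.single (star a) (starRingEnd ℂ c)) x
  simp only [Finsupp.single_apply]
  by_cases h : a = star x
  · rw [if_pos h, if_pos (by rw [h, star_star])]
  · rw [if_neg h, if_neg (fun h2 => h (by rw [← h2, star_star])), map_zero]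

lemma mstar_add (f g : MonoidAlgebra ℂ M) : mstar (f + g) = mstar f + mstar g := by
  ext x
  exact map_add (starRingEnd ℂ) (f.coeff (star x)) (g.coeff (star x))

lemma mstar_zero : mstar (0 : MonoidAlgebra ℂ M) = 0 := by
  ext x
  exact map_zero (starRingEnd ℂ)

lemma mstar_mul (f g : MonoidAlgebra ℂ M) : mstar (f * g) = mstar g * mstar f := by
  induction f using MonoidAlgebra.induction_linear with
  | zero =>
      exact (congrArg mstar (zero_mul g)).trans (mstar_zero.trans
        ((mul_zero (mstar g)).symm.trans (congrArg _ mstar_zero.symm)))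
  | add f1 f2 h1 h2 =>
      refine Eq.trans (congrArg mstar (@add_mul (MonoidAlgebra ℂ M) _ _ _ f1 f2 g)) ?_
      rw [mstar_add, h1, h2, ← mul_add]
      exact congrArg (mstar g * ·) (mstar_add f1 f2).symm
  | single a c =>
    induction g using MonoidAlgebra.induction_linear with
    | zero =>
        exact (congrArg mstar (mul_zero _)).trans (mstar_zero.trans
          ((zero_mul _).symm.trans (congrArg (· * _) mstar_zero.symm)))
    | add g1 g2 h1 h2 =>
        refine Eq.trans (congrArg mstar (@mul_add (MonoidAlgebra ℂ M) _ _ _ _ g1 g2)) ?_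
        rw [mstar_add, h1, h2, ← add_mul]
        exact congrArg (· * mstar (MonoidAlgebra.single a c)) (mstar_add g1 g2).symm
    | single b d =>
      show mstar ((MonoidAlgebra.single a c) * (MonoidAlgebra.single b d)) =
        mstar (MonoidAlgebra.single b d) * mstar (MonoidAlgebra.single a c)
      rw [MonoidAlgebra.single_mul_single, mstar_single, mstar_single, mstar_single,
        MonoidAlgebra.single_mul_single, star_mul, map_mul, mul_comm (starRingEnd ℂ d)]

/-- the `*`-ring structure of `ℂ[M]` -/
noncomputable instance instMAStar : StarRing (MonoidAlgebra ℂ M) where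
  star := mstar
  star_involutive f := by
    ext x
    calc (mstar (mstar f)).coeff x = starRingEnd ℂ (starRingEnd ℂ (f.coeff (star (star x)))) := rfl
      _ = f.coeff (star (star x)) := Complex.conj_conj _
      _ = f.coeff x := congrArg (fun y => f.coeff y) (star_star x)
  star_mul := mstar_mul
  star_add := mstar_add

lemma star_of' (a : M) :
    star (MonoidAlgebra.of ℂ M a) = MonoidAlgebra.of ℂ M (star a) := by
  show mstar _ = _
  rw [show (MonoidAlgebra.of ℂ M a : MonoidAlgebra ℂ M) = MonoidAlgebra.single a 1 from rfl,
    mstar_single, map_one]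
  rfl

end MonoidAlgebraStar

/-- On a group, `star g = g⁻¹`; together with the above this makes `ℂG` a group `*`-algebra
with `(λ·g)* = conj(λ)·g⁻¹`. -/
instance groupStar {G : Type*} [Group G] : StarMul G where
  star := (·⁻¹)
  star_involutive := inv_inv
  star_mul := mul_inv_rev

lemma star_grp {G : Type*} [Group G] (g : G) : star g = g⁻¹ := rfl

section LinearSystem

variable {p m n : ℕ}

/-- `V_i`, the support of the `i`-th row of `A` -/
def Vset (A : Matrix (Fin m) (Fin n) (ZMod p)) (i : Fin m) : Finset (Fin n) :=
  Finset.univ.filter fun j => A i j ≠ 0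

/-- `S_i(A,b)`: solutions of the `i`-th equation supported inside `V_i` -/
def Ssol [NeZero p] (A : Matrix (Fin m) (Fin n) (ZMod p)) (b : Fin m → ZMod p) (i : Fin m) :
    Finset (Fin n → ZMod p) :=
  Finset.univ.filter fun x => (∑ j, A i j * x j) = b i ∧ ∀ j, x j ≠ 0 → j ∈ Vset A i

/-- `(x,y)` are incompatible solutions for rows `(i,k)` -/
def Incompat (A : Matrix (Fin m) (Fin n) (ZMod p)) (i k : Fin m)
    (x y : Fin n → ZMod p) : Prop :=
  ∃ j ∈ Vset A i ∩ Vset A k, x j ≠ y j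

lemma Incompat.symm {A : Matrix (Fin m) (Fin n) (ZMod p)} {i k : Fin m}
    {x y : Fin n → ZMod p} (h : Incompat A i k x y) : Incompat A k i y x := by
  obtain ⟨j, hj, hne⟩ := h
  exact ⟨j, by simpa [Finset.mem_inter, and_comm] using hj, hne.symm⟩

end LinearSystem

open scoped commutatorElement

section SolutionGroup

variable {p m n : ℕ}

/-- the relators of the solution group `Γ(A,b)`; the generator `none` plays the role of `J`
and `some j` plays the role of `g_j`.  The relators are `g_j^p`, `J^p`, `[g_j, J]`,
`[g_j, g_ℓ]` for `j,ℓ ∈ V_i`, and `(∏_j g_j^{A_{i,j}})·J^{-b_i}`. -/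
def solRels (p : ℕ) (A : Matrix (Fin m) (Fin n) (ZMod p)) (b : Fin m → ZMod p) :
    Set (FreeGroup (Option (Fin n))) :=
  { w | (∃ j : Fin n, w = FreeGroup.of (some j) ^ p)
    ∨ w = FreeGroup.of (none : Option (Fin n)) ^ p
    ∨ (∃ j : Fin n, w = ⁅FreeGroup.of (some j), FreeGroup.of (none : Option (Fin n))⁆)
    ∨ (∃ i : Fin m, ∃ j l : Fin n, j ∈ Vset A i ∧ l ∈ Vset A i ∧
        w = ⁅FreeGroup.of (some j), FreeGroup.of (some l)⁆)
    ∨ (∃ i : Fin m,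
        w = ((List.finRange n).map fun j => FreeGroup.of (some j) ^ ((A i j).val)).prod *
          FreeGroup.of (none : Option (Fin n)) ^ (-(((b i).val : ℤ)))) }

/-- the solution group `Γ(A,b)` -/
abbrev SolutionGroup (p : ℕ) (A : Matrix (Fin m) (Fin n) (ZMod p)) (b : Fin m → ZMod p) :=
  PresentedGroup (solRels p A b)

/-- the generator `g_j` of the solution group -/
def gj {p : ℕ} {A : Matrix (Fin m) (Fin n) (ZMod p)} {b : Fin m → ZMod p} (j : Fin n) :
    SolutionGroup p A b := PresentedGroup.of (some j)

/-- the central generator `J` of the solution group -/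
def Jgen {p : ℕ} {A : Matrix (Fin m) (Fin n) (ZMod p)} {b : Fin m → ZMod p} :
    SolutionGroup p A b := PresentedGroup.of none

/-- `J` as an element of the group `*`-algebra `ℂΓ(A,b)` -/
noncomputable def Jga (p : ℕ) (A : Matrix (Fin m) (Fin n) (ZMod p)) (b : Fin m → ZMod p) :
    MonoidAlgebra ℂ (SolutionGroup p A b) :=
  MonoidAlgebra.of ℂ _ Jgen

/-- the relation generating the two-sided `*`-ideal `⟨J - ω·1⟩` of `ℂΓ(A,b)` -/
inductive QuotRel (ω : ℂ) (p : ℕ) (A : Matrix (Fin m) (Fin n) (ZMod p)) (b : Fin m → ZMod p) :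
    MonoidAlgebra ℂ (SolutionGroup p A b) → MonoidAlgebra ℂ (SolutionGroup p A b) → Prop
  | base : QuotRel ω p A b (Jga p A b - algebraMap ℂ _ ω) 0
  | star_base : QuotRel ω p A b (star (Jga p A b - algebraMap ℂ _ ω)) 0

/-- the quotient `*`-algebra `ℂΓ(A,b)/⟨J-ω·1⟩` -/
abbrev SolQuot (ω : ℂ) (p : ℕ) (A : Matrix (Fin m) (Fin n) (ZMod p)) (b : Fin m → ZMod p) :=
  RingQuot (QuotRel ω p A b)

noncomputable instance (ω : ℂ) (p : ℕ) (A : Matrix (Fin m) (Fin n) (ZMod p))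
    (b : Fin m → ZMod p) : StarRing (SolQuot ω p A b) := by
  refine RingQuot.starRing _ ?_
  intro a c h
  cases h with
  | base => rw [star_zero]; exact QuotRel.star_base
  | star_base => rw [star_zero, star_star]; exact QuotRel.base

end SolutionGroup

section Fj

variable {p m n : ℕ}

lemma PresentedGroup.rel_one {α : Type*} {rels : Set (FreeGroup α)} {r : FreeGroup α}
    (h : r ∈ rels) : PresentedGroup.mk rels r = 1 :=
  (QuotientGroup.eq_one_iff _).mpr (Subgroup.subset_normalClosure h)

/-- generators of the solution group indexed by a common row commute -/
lemma gj_commute {A : Matrix (Fin m) (Fin n) (ZMod p)} {b : Fin m → ZMod p} {i : Fin m}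
    {j l : Fin n} (hj : j ∈ Vset A i) (hl : l ∈ Vset A i) :
    Commute (gj (A := A) (b := b) j) (gj l) := by
  have hr : (⁅FreeGroup.of (some j), FreeGroup.of (some l)⁆ : FreeGroup (Option (Fin n)))
      ∈ solRels p A b := Or.inr (Or.inr (Or.inr (Or.inl ⟨i, j, l, hj, hl, rfl⟩)))
  have h1 := PresentedGroup.rel_one hr
  rw [map_commutatorElement] at h1
  exact commutatorElement_eq_one_iff_commute.mp h1

/-- the element `f_j(s) = (1/p)·∑_{t=0}^{p-1} (ω^{-s} g_j)^t` of `ℂΓ(A,b)` -/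
noncomputable def fj (ω : ℂ) {p : ℕ} {A : Matrix (Fin m) (Fin n) (ZMod p)}
    {b : Fin m → ZMod p} (j : Fin n) (s : ZMod p) : MonoidAlgebra ℂ (SolutionGroup p A b) :=
  (p : ℂ)⁻¹ • ∑ t ∈ Finset.range p,
    ((ω ^ (-(s.val : ℤ))) • MonoidAlgebra.of ℂ (SolutionGroup p A b) (gj j)) ^ t

/-- for `j, ℓ ∈ V_i` the elements `f_j(s)` and `f_ℓ(r)` of `ℂΓ(A,b)` commute -/
lemma fj_commute (ω : ℂ) {A : Matrix (Fin m) (Fin n) (ZMod p)} {b : Fin m → ZMod p} {i : Fin m}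
    {j l : Fin n} (hj : j ∈ Vset A i) (hl : l ∈ Vset A i) (s r : ZMod p) :
    Commute (fj ω (A := A) (b := b) j s) (fj ω l r) := by
  have hg : Commute ((ω ^ (-(s.val : ℤ))) • MonoidAlgebra.of ℂ (SolutionGroup p A b) (gj j))
      ((ω ^ (-(r.val : ℤ))) • MonoidAlgebra.of ℂ (SolutionGroup p A b) (gj l)) :=
    (((gj_commute hj hl).map (MonoidAlgebra.of ℂ (SolutionGroup p A b))).smul_left _).smul_right _
  exact ((Commute.sum_left _ _ _ fun t _ =>
    Commute.sum_right _ _ _ fun u _ => hg.pow_pow t u).smul_left _).smul_right _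

/-- the (well-defined) product `∏_{j ∈ V_i} f_j(x_j)` in `ℂΓ(A,b)` -/
noncomputable def fprod (ω : ℂ) {p : ℕ} (A : Matrix (Fin m) (Fin n) (ZMod p))
    (b : Fin m → ZMod p) (i : Fin m) (x : Fin n → ZMod p) :
    MonoidAlgebra ℂ (SolutionGroup p A b) :=
  (Vset A i).noncommProd (fun j => fj ω (A := A) (b := b) j (x j))
    (fun j hj l hl _ => fj_commute ω (Finset.mem_coe.mp hj) (Finset.mem_coe.mp hl) _ _)

end Fj

section Aux

variable {p m n : ℕ} {ω : ℂ} {A : Matrix (Fin m) (Fin n) (ZMod p)} {b : Fin m → ZMod p}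

lemma gj_pow_p (j : Fin n) : (gj (A := A) (b := b) j) ^ p = 1 := by
  have hr : (FreeGroup.of (some j) ^ p : FreeGroup (Option (Fin n))) ∈ solRels p A b :=
    Or.inl ⟨j, rfl⟩
  have h := PresentedGroup.rel_one hr
  rwa [map_pow] at h

lemma Jgen_pow_p : (Jgen (A := A) (b := b)) ^ p = 1 := by
  have hr : (FreeGroup.of (none : Option (Fin n)) ^ p : FreeGroup (Option (Fin n)))
      ∈ solRels p A b := Or.inr (Or.inl rfl)
  have h := PresentedGroup.rel_one hr
  rwa [map_pow] at h

/-- `g_j` acts on `f_j(s)` by the eigenvalue `ω^s`. -/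
lemma of_gj_mul_fj (hω : IsPrimitiveRoot ω p) (hp : 0 < p) (j : Fin n) (s : ZMod p) :
    MonoidAlgebra.of ℂ (SolutionGroup p A b) (gj j) * fj ω (A := A) (b := b) j s
      = (ω ^ s.val) • fj ω j s := by
  have hω0 : ω ≠ 0 := hω.ne_zero hp.ne'
  set G := MonoidAlgebra.of ℂ (SolutionGroup p A b) (gj (A := A) (b := b) j) with hG
  set c : ℂ := ω ^ (-(s.val : ℤ)) with hc
  set X := c • G with hX
  have hGp : G ^ p = 1 := by
    rw [hG, ← map_pow, gj_pow_p, map_one]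
  have hcp : c ^ p = 1 := by
    rw [hc, ← zpow_natCast (ω ^ (-(s.val : ℤ))) p, ← zpow_mul, mul_comm, zpow_mul,
      zpow_natCast, hω.pow_eq_one, one_zpow]
  have hXp : X ^ p = 1 := by rw [hX, smul_pow, hcp, hGp, one_smul]
  have hcinv : (ω ^ s.val) * c = 1 := by
    rw [hc, ← zpow_natCast ω s.val, ← zpow_add₀ hω0]
    simp
  have key : X * ∑ t ∈ Finset.range p, X ^ t = ∑ t ∈ Finset.range p, X ^ t := by
    rw [Finset.mul_sum]
    have h1 : ∀ t, X * X ^ t = X ^ (t + 1) := fun t => (pow_succ' X t).symm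
    simp_rw [h1]
    have h2 : ∑ t ∈ Finset.range (p + 1), X ^ t
        = (∑ t ∈ Finset.range p, X ^ (t + 1)) + X ^ 0 := Finset.sum_range_succ' _ _
    have h3 : ∑ t ∈ Finset.range (p + 1), X ^ t
        = (∑ t ∈ Finset.range p, X ^ t) + X ^ p := Finset.sum_range_succ _ _
    have := h2.symm.trans h3
    rw [hXp, pow_zero] at this
    exact add_right_cancel this
  have hGX : G = (ω ^ s.val) • X := by
    rw [hX, smul_smul, hcinv, one_smul]
  calc G * fj ω j s = G * ((p : ℂ)⁻¹ • ∑ t ∈ Finset.range p, X ^ t) := rfl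
    _ = (p : ℂ)⁻¹ • (G * ∑ t ∈ Finset.range p, X ^ t) := (mul_smul_comm _ _ _)
    _ = (p : ℂ)⁻¹ • ((ω ^ s.val) • (X * ∑ t ∈ Finset.range p, X ^ t)) := by
        rw [hGX, smul_mul_assoc]
    _ = (ω ^ s.val) • ((p : ℂ)⁻¹ • ∑ t ∈ Finset.range p, X ^ t) := by
        rw [key, smul_comm]
    _ = (ω ^ s.val) • fj ω j s := rfl

lemma of_gj_commute_fj {i : Fin m} {j l : Fin n} (hj : j ∈ Vset A i) (hl : l ∈ Vset A i)
    (r : ZMod p) :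
    Commute (MonoidAlgebra.of ℂ (SolutionGroup p A b) (gj j)) (fj ω (A := A) (b := b) l r) := by
  have hg := (gj_commute (b := b) hj hl).map (MonoidAlgebra.of ℂ (SolutionGroup p A b))
  exact (Commute.sum_right _ _ _ fun t _ => ((hg.smul_right _).pow_right t)).smul_right _

/-- `g_j` acts on the product `∏_{l ∈ V_i} f_l(x_l)` by the eigenvalue `ω^{x_j}` when `j ∈ V_i`. -/
lemma of_gj_mul_fprod (hω : IsPrimitiveRoot ω p) (hp : 0 < p) {i : Fin m} {j : Fin n}
    (hj : j ∈ Vset A i) (x : Fin n → ZMod p) :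
    MonoidAlgebra.of ℂ (SolutionGroup p A b) (gj j) * fprod ω A b i x
      = (ω ^ (x j).val) • fprod ω A b i x := by
  classical
  have hsplit := Finset.mul_noncommProd_erase (Vset A i) hj
    (fun l => fj ω (A := A) (b := b) l (x l))
    (fun a ha c hc _ => fj_commute ω (Finset.mem_coe.mp ha) (Finset.mem_coe.mp hc) _ _)
  have hfp : fprod ω A b i x = fj ω (A := A) (b := b) j (x j) *
      ((Vset A i).erase j).noncommProd (fun l => fj ω (A := A) (b := b) l (x l))
        (fun a ha c hc _ => fj_commute ω
          (Finset.mem_coe.mp (Finset.mem_of_mem_erase ha))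
          (Finset.mem_coe.mp (Finset.mem_of_mem_erase hc)) _ _) := hsplit.symm
  rw [hfp, ← mul_assoc, of_gj_mul_fj hω hp, smul_mul_assoc]

lemma of_gj_pow_mul_fprod (hω : IsPrimitiveRoot ω p) (hp : 0 < p) {i : Fin m} {j : Fin n}
    (hj : j ∈ Vset A i) (x : Fin n → ZMod p) (k : ℕ) :
    (MonoidAlgebra.of ℂ (SolutionGroup p A b) (gj j)) ^ k * fprod ω A b i x
      = (ω ^ ((x j).val * k)) • fprod ω A b i x := by
  induction k with
  | zero => simp
  | succ k ih =>
      rw [pow_succ', mul_assoc, ih, mul_smul_comm, of_gj_mul_fprod hω hp hj,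
        smul_smul, ← pow_add, Nat.mul_succ]

/-- the action of the list product of `g_j^{A_{i,j}}` on `∏ f_l(x_l)` -/
lemma list_prod_mul_fprod (hω : IsPrimitiveRoot ω p) (hp : 0 < p) (i : Fin m)
    (x : Fin n → ZMod p) (l : List (Fin n)) :
    ((l.map fun j => (MonoidAlgebra.of ℂ (SolutionGroup p A b) (gj j)) ^ (A i j).val).prod)
        * fprod ω A b i x
      = (ω ^ ((l.map fun j => (A i j).val * (x j).val).sum)) • fprod ω A b i x := by
  induction l with
  | nil => simp
  | cons j l ih =>
      rw [List.map_cons, List.prod_cons, mul_assoc, ih, mul_smul_comm,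
        List.map_cons, List.sum_cons]
      by_cases hj : A i j = 0
      · rw [hj, ZMod.val_zero, pow_zero, one_mul, zero_mul, zero_add]
      · have hjV : j ∈ Vset A i := by
          simp [Vset, hj]
        rw [of_gj_pow_mul_fprod hω hp hjV, smul_smul, ← pow_add]
        congr 1
        ring

/-- the `i`-th row relation in the solution group -/
lemma gprod_eq_Jpow (i : Fin m) :
    (((List.finRange n).map fun j => (gj (A := A) (b := b) j) ^ (A i j).val).prod)
      = Jgen ^ ((b i).val) := by
  have hr : (((List.finRange n).map fun j =>
        FreeGroup.of (some j) ^ ((A i j).val)).prod *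
        FreeGroup.of (none : Option (Fin n)) ^ (-(((b i).val : ℤ))) : FreeGroup (Option (Fin n)))
      ∈ solRels p A b := Or.inr (Or.inr (Or.inr (Or.inr ⟨i, rfl⟩)))
  have h := PresentedGroup.rel_one hr
  rw [map_mul, map_zpow, map_list_prod, List.map_map] at h
  have hmap : ((List.finRange n).map
      ((PresentedGroup.mk (solRels p A b)) ∘ fun j => FreeGroup.of (some j) ^ (A i j).val))
      = (List.finRange n).map fun j => (gj (A := A) (b := b) j) ^ (A i j).val := by
    refine List.map_congr_left fun j _ => ?_
    simp only [Function.comp_apply, map_pow]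
    rfl
  rw [hmap] at h
  have hJ : PresentedGroup.mk (solRels p A b) (FreeGroup.of (none : Option (Fin n)))
      = Jgen (A := A) (b := b) := rfl
  rw [hJ] at h
  have := mul_eq_one_iff_eq_inv.mp h
  rw [this, ← zpow_neg, neg_neg, zpow_natCast]

/-- in the quotient, `J` becomes the scalar `ω` -/
lemma mkAlgHom_Jga (ω : ℂ) (p : ℕ) (A : Matrix (Fin m) (Fin n) (ZMod p)) (b : Fin m → ZMod p) :
    RingQuot.mkAlgHom ℂ (QuotRel ω p A b) (Jga p A b)
      = algebraMap ℂ (SolQuot ω p A b) ω := by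
  have h := RingQuot.mkAlgHom_rel ℂ (QuotRel.base (ω := ω) (p := p) (A := A) (b := b))
  rw [map_sub, map_zero, sub_eq_zero] at h
  rw [h]
  exact AlgHom.commutes _ ω

lemma pow_mod_p (hω : IsPrimitiveRoot ω p) (k : ℕ) : ω ^ k = ω ^ (k % p) := by
  conv_lhs => rw [← Nat.div_add_mod k p]
  rw [pow_add, pow_mul, hω.pow_eq_one, one_pow, one_mul]

/-- the quotient kills the products corresponding to non-solutions -/
lemma fprod_eq_zero_of_not_sol [Fact p.Prime] (hω : IsPrimitiveRoot ω p) (i : Fin m)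
    (x : Fin n → ZMod p) (hx : (∑ j, A i j * x j) ≠ b i) :
    RingQuot.mkAlgHom ℂ (QuotRel ω p A b) (fprod ω A b i x) = 0 := by
  have hp : 0 < p := (Fact.out : p.Prime).pos
  haveI : NeZero p := ⟨hp.ne'⟩
  set π := RingQuot.mkAlgHom ℂ (QuotRel ω p A b) with hπ
  set N : ℕ := ((List.finRange n).map fun j => (A i j).val * (x j).val).sum with hN
  set M : ℕ := (b i).val with hM
  -- the algebra list product equals `of` of the group list product
  have hPa : ((List.finRange n).map fun j =>
        (MonoidAlgebra.of ℂ (SolutionGroup p A b) (gj j)) ^ (A i j).val).prod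
      = MonoidAlgebra.of ℂ (SolutionGroup p A b) (Jgen ^ M) := by
    rw [← gprod_eq_Jpow (b := b) i, map_list_prod, List.map_map]
    refine congrArg List.prod (List.map_congr_left fun j _ => ?_)
    simp [map_pow]
  have hkey := list_prod_mul_fprod (A := A) (b := b) hω hp i x (List.finRange n)
  rw [hPa, ← hN, Algebra.smul_def] at hkey
  have hJM : π (MonoidAlgebra.of ℂ (SolutionGroup p A b) (Jgen ^ M))
      = algebraMap ℂ (SolQuot ω p A b) (ω ^ M) := by
    rw [map_pow (MonoidAlgebra.of ℂ (SolutionGroup p A b)), map_pow, map_pow]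
    exact congrArg (· ^ M) (mkAlgHom_Jga ω p A b)
  have hq := congrArg π hkey
  rw [map_mul, map_mul, hJM, AlgHom.commutes] at hq
  -- hq : algebraMap (ω^M) * π (fprod) = algebraMap (ω^N) * π (fprod)
  have hMN : (ω : ℂ) ^ M ≠ ω ^ N := by
    intro hEq
    apply hx
    rw [pow_mod_p hω M, pow_mod_p hω N] at hEq
    have hmp := hω.pow_inj (Nat.mod_lt _ hp) (Nat.mod_lt _ hp) hEq
    have hcast : ((M : ZMod p)) = ((N : ZMod p)) := by
      rw [← ZMod.natCast_mod M p, ← ZMod.natCast_mod N p, hmp]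
    have hMb : ((M : ZMod p)) = b i := by
      rw [hM, ZMod.natCast_val, ZMod.cast_id]
    have hNx : ((N : ZMod p)) = ∑ j, A i j * x j := by
      rw [hN, ← Fin.sum_univ_def (fun j => (A i j).val * (x j).val)]
      push_cast [ZMod.natCast_val, ZMod.cast_id]
      rfl
    rw [← hNx, ← hcast, hMb]
  have hne : (ω ^ M - ω ^ N : ℂ) ≠ 0 := sub_ne_zero.mpr hMN
  have hu : algebraMap ℂ (SolQuot ω p A b) (ω ^ M - ω ^ N) * π (fprod ω A b i x) = 0 := by
    rw [map_sub, sub_mul, hq, sub_self]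
  calc π (fprod ω A b i x)
      = algebraMap ℂ (SolQuot ω p A b) ((ω ^ M - ω ^ N)⁻¹) *
        (algebraMap ℂ (SolQuot ω p A b) (ω ^ M - ω ^ N) * π (fprod ω A b i x)) := by
        rw [← mul_assoc, ← map_mul, inv_mul_cancel₀ hne, map_one, one_mul]
    _ = 0 := by rw [hu, mul_zero]

/-- `∑_s f_j(s) = 1` -/
lemma sum_fj [Fact p.Prime] (hω : IsPrimitiveRoot ω p) (j : Fin n) :
    ∑ s : ZMod p, fj ω (A := A) (b := b) j s = 1 := by
  classical
  have hp : 0 < p := (Fact.out : p.Prime).pos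
  haveI : NeZero p := ⟨hp.ne'⟩
  have hω0 : ω ≠ 0 := hω.ne_zero hp.ne'
  set G := MonoidAlgebra.of ℂ (SolutionGroup p A b) (gj (A := A) (b := b) j) with hG
  have step : ∀ s : ZMod p, fj ω (A := A) (b := b) j s
      = (p : ℂ)⁻¹ • ∑ t ∈ Finset.range p, (((ω ^ t)⁻¹) ^ s.val) • G ^ t := by
    intro s
    unfold fj
    congr 1
    refine Finset.sum_congr rfl fun t _ => ?_
    rw [smul_pow]
    congr 1
    rw [inv_pow, ← pow_mul, ← zpow_natCast (ω ^ (-(s.val : ℤ))) t, ← zpow_mul,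
      ← zpow_natCast ω (t * s.val), ← zpow_neg]
    congr 1
    push_cast
    ring
  rw [Finset.sum_congr rfl fun s _ => step s, ← Finset.smul_sum, Finset.sum_comm]
  have inner : ∀ t ∈ Finset.range p,
      (∑ s : ZMod p, (((ω ^ t)⁻¹) ^ s.val) • G ^ t)
        = (∑ k ∈ Finset.range p, ((ω ^ t)⁻¹) ^ k) • G ^ t := by
    intro t _
    rw [← Finset.sum_smul]
    congr 1
    refine Finset.sum_nbij' (fun s => s.val) (fun k => (k : ZMod p)) ?_ ?_ ?_ ?_ ?_
    · intro s _; exact Finset.mem_range.mpr (ZMod.val_lt s)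
    · intro k _; exact Finset.mem_univ _
    · intro s _; exact ZMod.natCast_rightInverse s
    · intro k hk; exact ZMod.val_cast_of_lt (Finset.mem_range.mp hk)
    · intro s _; rfl
  rw [Finset.sum_congr rfl inner]
  have geom : ∀ t ∈ Finset.range p, t ≠ 0 →
      ((∑ k ∈ Finset.range p, ((ω ^ t)⁻¹) ^ k) • G ^ t
        : MonoidAlgebra ℂ (SolutionGroup p A b)) = 0 := by
    intro t ht ht0
    have hζ1 : ((ω ^ t)⁻¹ : ℂ) ≠ 1 := by
      rw [ne_eq, inv_eq_one]
      exact hω.pow_ne_one_of_pos_of_lt ht0 (Finset.mem_range.mp ht)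
    have hζp : (((ω ^ t)⁻¹ : ℂ)) ^ p = 1 := by
      rw [inv_pow, ← pow_mul, mul_comm, pow_mul, hω.pow_eq_one, one_pow, inv_one]
    rw [geom_sum_eq hζ1, hζp, sub_self, zero_div, zero_smul]
  rw [Finset.sum_eq_single_of_mem 0 (Finset.mem_range.mpr hp) geom]
  have hpc : ((p : ℂ)) ≠ 0 := Nat.cast_ne_zero.mpr hp.ne'
  simp only [pow_zero, inv_one, one_pow, Finset.sum_const, Finset.card_range, nsmul_eq_mul,
    mul_one, smul_smul, smul_eq_mul]
  rw [inv_mul_cancel₀ hpc, one_smul]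

/-- the finset of vectors supported inside `T` -/
def suppIn (p : ℕ) [NeZero p] {n : ℕ} (T : Finset (Fin n)) : Finset (Fin n → ZMod p) :=
  Finset.univ.filter fun x => ∀ j, x j ≠ 0 → j ∈ T

lemma sum_suppIn_noncommProd [Fact p.Prime] [NeZero p] (hω : IsPrimitiveRoot ω p) (i : Fin m)
    (T : Finset (Fin n)) (hT : T ⊆ Vset A i) :
    ∑ x ∈ suppIn p T, T.noncommProd (fun j => fj ω (A := A) (b := b) j (x j))
      (fun j hj l hl _ => fj_commute ω (hT (Finset.mem_coe.mp hj))
        (hT (Finset.mem_coe.mp hl)) _ _) = 1 := by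
  classical
  revert hT
  induction T using Finset.induction_on with
  | empty =>
      intro hT
      have hs : suppIn p (∅ : Finset (Fin n)) = {fun _ => (0 : ZMod p)} := by
        ext x
        simp only [suppIn, Finset.mem_filter, Finset.mem_univ, true_and,
          Finset.mem_singleton]
        constructor
        · intro h
          funext j
          by_contra hj
          exact absurd (h j hj) (Finset.notMem_empty j)
        · rintro rfl j hj
          exact absurd rfl hj
      rw [hs, Finset.sum_singleton]
      exact Finset.noncommProd_empty _ _
  | @insert a T ha ih =>
      intro hT
      have hT' : T ⊆ Vset A i := fun j hj => hT (Finset.mem_insert_of_mem hj)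
      have hbij : ∑ x ∈ suppIn p (insert a T),
          (insert a T).noncommProd (fun j => fj ω (A := A) (b := b) j (x j))
            (fun j hj l hl _ => fj_commute ω (hT (Finset.mem_coe.mp hj))
              (hT (Finset.mem_coe.mp hl)) _ _)
          = ∑ sy ∈ (Finset.univ : Finset (ZMod p)) ×ˢ suppIn p T,
              fj ω (A := A) (b := b) a sy.1 *
                T.noncommProd (fun j => fj ω (A := A) (b := b) j (sy.2 j))
                  (fun j hj l hl _ => fj_commute ω (hT' (Finset.mem_coe.mp hj))
                    (hT' (Finset.mem_coe.mp hl)) _ _) := by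
        refine Finset.sum_nbij' (fun x => (x a, Function.update x a 0))
          (fun sy => Function.update sy.2 a sy.1) ?_ ?_ ?_ ?_ ?_
        · intro x hx
          simp only [suppIn, Finset.mem_filter, Finset.mem_univ, true_and] at hx ⊢
          refine Finset.mem_product.mpr ⟨Finset.mem_univ _, ?_⟩
          simp only [suppIn, Finset.mem_filter, Finset.mem_univ, true_and]
          intro j hj
          by_cases hja : j = a
          · subst hja; simp at hj
          · rw [Function.update_of_ne hja] at hj
            exact (Finset.mem_insert.mp (hx j hj)).resolve_left hja
        · intro sy hsy
          obtain ⟨-, hy⟩ := Finset.mem_product.mp hsy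
          simp only [suppIn, Finset.mem_filter, Finset.mem_univ, true_and] at hy ⊢
          intro j hj
          by_cases hja : j = a
          · subst hja; exact Finset.mem_insert_self _ _
          · rw [Function.update_of_ne hja] at hj
            exact Finset.mem_insert_of_mem (hy j hj)
        · intro x hx
          simp only
          rw [Function.update_idem, Function.update_eq_self]
        · intro sy hsy
          obtain ⟨-, hy⟩ := Finset.mem_product.mp hsy
          simp only [suppIn, Finset.mem_filter, Finset.mem_univ, true_and] at hy
          have hya : sy.2 a = 0 := by
            by_contra h
            exact ha (hy a h)
          ext j
          · simp
          · simp only [Function.update_idem]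
            by_cases hja : j = a
            · subst hja; rw [Function.update_self, hya]
            · rw [Function.update_of_ne hja]
        · intro x hx
          dsimp only
          refine (Finset.noncommProd_insert_of_notMem _ _ _ _ ha).trans ?_
          exact congrArg (fj ω (A := A) (b := b) a (x a) * ·)
            (Finset.noncommProd_congr rfl (fun j hj => by
              rw [Function.update_of_ne (ne_of_mem_of_not_mem hj ha)]) _)
      rw [hbij, Finset.sum_product]
      simp only [← Finset.mul_sum]
      have hstep : ∀ s : ZMod p, fj ω (A := A) (b := b) a s *
          (∑ y ∈ suppIn p T, T.noncommProd (fun j => fj ω (A := A) (b := b) j (y j))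
            (fun j hj l hl _ => fj_commute ω (hT' (Finset.mem_coe.mp hj))
              (hT' (Finset.mem_coe.mp hl)) _ _))
          = fj ω (A := A) (b := b) a s := by
        intro s
        rw [ih hT', mul_one]
      calc (∑ s : ZMod p, fj ω (A := A) (b := b) a s *
          (∑ y ∈ suppIn p T, T.noncommProd (fun j => fj ω (A := A) (b := b) j (y j))
            (fun j hj l hl _ => fj_commute ω (hT' (Finset.mem_coe.mp hj))
              (hT' (Finset.mem_coe.mp hl)) _ _)))
          = ∑ s : ZMod p, fj ω (A := A) (b := b) a s :=
            Finset.sum_congr rfl fun s _ => hstep s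
        _ = 1 := sum_fj hω a

end Aux

/-- For each row `i` with `V_i` nonempty,
`∑_{x ∈ S_i(A,b)} ∏_{j ∈ V_i} f_j(x_j) = 1` in `ℂΓ(A,b)/⟨J-ω·1⟩`. -/
theorem statement14 (p : ℕ) [Fact p.Prime] {m n : ℕ} (ω : ℂ) (hω : IsPrimitiveRoot ω p)
    (A : Matrix (Fin m) (Fin n) (ZMod p)) (b : Fin m → ZMod p)
    (i : Fin m) (hV : (Vset A i).Nonempty) :
    ∑ x ∈ Ssol A b i, RingQuot.mkAlgHom ℂ (QuotRel ω p A b) (fprod ω A b i x) = 1 := by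
  classical
  have hp : 0 < p := (Fact.out : p.Prime).pos
  haveI : NeZero p := ⟨hp.ne'⟩
  have hsub : Ssol A b i ⊆ suppIn p (Vset A i) := by
    intro x hx
    simp only [Ssol, Finset.mem_filter, Finset.mem_univ, true_and] at hx
    simp only [suppIn, Finset.mem_filter, Finset.mem_univ, true_and]
    exact hx.2
  have hzero : ∀ x ∈ suppIn p (Vset A i), x ∉ Ssol A b i →
      RingQuot.mkAlgHom ℂ (QuotRel ω p A b) (fprod ω A b i x) = 0 := by
    intro x hx hxs
    simp only [suppIn, Finset.mem_filter, Finset.mem_univ, true_and] at hx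
    have hne : (∑ j, A i j * x j) ≠ b i := by
      intro heq
      refine hxs ?_
      simp only [Ssol, Finset.mem_filter, Finset.mem_univ, true_and]
      exact ⟨heq, hx⟩
    exact fprod_eq_zero_of_not_sol hω i x hne
  have hsum : (∑ x ∈ suppIn p (Vset A i), fprod ω A b i x) = 1 :=
    sum_suppIn_noncommProd hω i (Vset A i) (fun j hj => hj)
  rw [Finset.sum_subset hsub hzero, ← map_sum, hsum, map_one]

end
end

section
/- Let p be a prime, A an m×n matrix over ℤ/p, b ∈ (ℤ/p)^m, and i, i' ∈ {1,…,m}. Suppose x ∈ S_i(A,b), x' ∈ S_{i'}(A,b), y ∈ S_i(A,0), y' ∈ S_{i'}(A,0). Then x+y ∈ S_i(A,b) and x'+y' ∈ S_{i'}(A,b); moreover, if (i,x) ~ (i',x') in G_{A,b} and (i,y) ≁ (i',y') in G_{A,0}, then (i,x+y) ~ (i',x'+y') in G_{A,b}. -/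
set_option maxHeartbeats 1000000
noncomputable section

section LinearSystem

variable {p m n : ℕ}

lemma mem_add [NeZero p] {A : Matrix (Fin m) (Fin n) (ZMod p)} {b : Fin m → ZMod p}
    {i : Fin m} {x y : Fin n → ZMod p} (hx : x ∈ Ssol A b i)
    (hy : y ∈ Ssol A (0 : Fin m → ZMod p) i) : x + y ∈ Ssol A b i := by
  simp only [Ssol, Finset.mem_filter, Finset.mem_univ, true_and] at *
  obtain ⟨hx1, hx2⟩ := hx; obtain ⟨hy1, hy2⟩ := hy
  refine ⟨?_, fun j hj => ?_⟩
  · simp only [Pi.add_apply, mul_add, Finset.sum_add_distrib, hx1, hy1]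
    simp
  · by_cases h : x j = 0
    · exact hy2 j (by simpa [h] using hj)
    · exact hx2 j h

end LinearSystem

/-- the vertex set of the graph `G_{A,b}`: pairs `(i,x)` with `x ∈ S_i(A,b)` -/
abbrev SyncGen {p m n : ℕ} [NeZero p] (A : Matrix (Fin m) (Fin n) (ZMod p))
    (b : Fin m → ZMod p) : Type _ :=
  Σ i : Fin m, {x : Fin n → ZMod p // x ∈ Ssol A b i}

/-- the graph `G_{A,b}`: two vertices are adjacent iff they are incompatible solutions -/
def lsGraph {p m n : ℕ} [NeZero p] (A : Matrix (Fin m) (Fin n) (ZMod p))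
    (b : Fin m → ZMod p) : SimpleGraph (SyncGen A b) where
  Adj v w := Incompat A v.1 w.1 v.2.1 w.2.1
  symm := ⟨fun _ _ h => h.symm⟩
  loopless := ⟨fun v h => by obtain ⟨j, _, hne⟩ := h; exact hne rfl⟩

/-- If `x ∈ S_i(A,b)`, `x' ∈ S_{i'}(A,b)`, `y ∈ S_i(A,0)`, `y' ∈ S_{i'}(A,0)`
then `x+y ∈ S_i(A,b)` and `x'+y' ∈ S_{i'}(A,b)`; moreover if `(i,x) ~ (i',x')` in `G_{A,b}`
and `(i,y) ≁ (i',y')` in `G_{A,0}`, then `(i,x+y) ~ (i',x'+y')` in `G_{A,b}`. -/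
theorem statement17 (p : ℕ) [Fact p.Prime] {m n : ℕ} (A : Matrix (Fin m) (Fin n) (ZMod p))
    (b : Fin m → ZMod p) (i i' : Fin m) (x x' y y' : Fin n → ZMod p)
    (hx : x ∈ Ssol A b i) (hx' : x' ∈ Ssol A b i')
    (hy : y ∈ Ssol A (0 : Fin m → ZMod p) i) (hy' : y' ∈ Ssol A (0 : Fin m → ZMod p) i') :
    ∃ (h1 : x + y ∈ Ssol A b i) (h2 : x' + y' ∈ Ssol A b i'),
      ((lsGraph A b).Adj ⟨i, ⟨x, hx⟩⟩ ⟨i', ⟨x', hx'⟩⟩ →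
       ¬ (lsGraph A (0 : Fin m → ZMod p)).Adj ⟨i, ⟨y, hy⟩⟩ ⟨i', ⟨y', hy'⟩⟩ →
       (lsGraph A b).Adj ⟨i, ⟨x + y, h1⟩⟩ ⟨i', ⟨x' + y', h2⟩⟩) := by
  refine ⟨mem_add hx hy, mem_add hx' hy', fun hadj hnadj => ?_⟩
  obtain ⟨j, hj, hne⟩ := hadj
  refine ⟨j, hj, ?_⟩
  have hyj : y j = y' j := by
    by_contra h
    exact hnadj ⟨j, hj, h⟩
  simp only [Pi.add_apply, hyj]
  intro h
  exact hne (by linear_combination h)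

end
end
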